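/- In the one-relator group G = ⟨a, b | a^{b²} = a·a^{3b}⟩, the identity [a^b, a]² = [[a, a^b], a^{3b}·b⁻¹] holds, and consequently for every n ≥ 1 there exists k with [a, a^b]^{2^k} ∈ γ_n(G) (so [a, a^b] is a generalized 2-torsion element of G). -/

import Mathlib

namespace OneRelatorLCS

/-- The relator `(b⁻²ab²)⁻¹ · a · (b⁻¹a³b)` in the free group on `a = of 0`, `b = of 1`,
expressing the relation `a^{b²} = a·a^{3b}` (with `x^y = y⁻¹xy`). -/
def rel : FreeGroup (Fin 2) :=
  ((FreeGroup.of 1)⁻¹ * (FreeGroup.of 1)⁻¹ * FreeGroup.of 0 * FreeGroup.of 1 * FreeGroup.of 1)⁻¹ *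
    FreeGroup.of 0 *
    ((FreeGroup.of 1)⁻¹ * (FreeGroup.of 0) ^ 3 * FreeGroup.of 1)

/-- The one-relator group `G = ⟨a, b | a^{b²} = a·a^{3b}⟩`. -/
abbrev G : Type := PresentedGroup ({rel} : Set (FreeGroup (Fin 2)))

def a : G := PresentedGroup.of 0
def b : G := PresentedGroup.of 1

/-- `[x,y] = x⁻¹y⁻¹xy`. -/
def cmt {H : Type*} [Group H] (x y : H) : H := x⁻¹ * y⁻¹ * x * y

lemma hrel : ((b⁻¹*b⁻¹*a*b*b)⁻¹ * a * (b⁻¹*a^3*b) : G) = 1 := by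
  have h : (PresentedGroup.mk ({rel} : Set (FreeGroup (Fin 2))) rel : G) = 1 := by
    apply (QuotientGroup.eq_one_iff _).2
    exact Subgroup.subset_normalClosure (Set.mem_singleton _)
  have e : (PresentedGroup.mk ({rel} : Set (FreeGroup (Fin 2))) rel : G)
      = (b⁻¹*b⁻¹*a*b*b)⁻¹ * a * (b⁻¹*a^3*b) := by
    simp only [rel, map_mul, map_inv, map_pow]
    rfl
  rw [e] at h
  exact h

lemma h1 : (b⁻¹*b⁻¹*a*b*b : G) = a * (b⁻¹*a^3*b) := by
  have e : (a * (b⁻¹*a^3*b) : G)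
      = (b⁻¹*b⁻¹*a*b*b) * ((b⁻¹*b⁻¹*a*b*b)⁻¹ * a * (b⁻¹*a^3*b)) := by group
  rw [hrel, mul_one] at e
  exact e.symm

lemma h2 : (a * (b⁻¹*a^3*b) : G) = b⁻¹*b⁻¹*a*b*b := h1.symm

/-- key identity: conjugation by `w = b⁻¹a³` inverts `c = [a, a^b]`. -/
lemma key : ((b⁻¹*a^3)⁻¹ * cmt a (b⁻¹*a*b) * (b⁻¹*a^3) : G) = (cmt a (b⁻¹*a*b))⁻¹ := by
  have key2 : (b⁻¹ * ((b⁻¹*a^3)⁻¹ * cmt a (b⁻¹*a*b) * (b⁻¹*a^3)) * b : G)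
      = b⁻¹ * (cmt a (b⁻¹*a*b))⁻¹ * b := by
    have e1 : (b⁻¹ * ((b⁻¹*a^3)⁻¹ * cmt a (b⁻¹*a*b) * (b⁻¹*a^3)) * b : G)
        = cmt (a * (b⁻¹*a^3*b)) (b⁻¹*a*b) := by
      unfold cmt; group
    rw [e1, h2]
    unfold cmt; group
  calc ((b⁻¹*a^3)⁻¹ * cmt a (b⁻¹*a*b) * (b⁻¹*a^3) : G)
      = b * (b⁻¹ * ((b⁻¹*a^3)⁻¹ * cmt a (b⁻¹*a*b) * (b⁻¹*a^3)) * b) * b⁻¹ := by group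
    _ = b * (b⁻¹ * (cmt a (b⁻¹*a*b))⁻¹ * b) * b⁻¹ := by rw [key2]
    _ = (cmt a (b⁻¹*a*b))⁻¹ := by group

/-- In `G = ⟨a, b | a^{b²} = a·a^{3b}⟩` one has
`[a^b, a]² = [[a, a^b], a^{3b}·b⁻¹]`, and consequently for every `n ≥ 1` there is
`k` with `[a, a^b]^{2^k} ∈ γ_n(G)` (so `[a, a^b]` is a generalized 2-torsion
element).  Here `γ_n(G) = lowerCentralSeries G (n-1)` since `γ_1(G) = G`. -/
theorem comm_is_generalized_two_torsion :
    (cmt (b⁻¹ * a * b) a) ^ 2 = cmt (cmt a (b⁻¹ * a * b)) (b⁻¹ * a ^ 3 * b * b⁻¹) ∧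
      ∀ n : ℕ, 1 ≤ n → ∃ k : ℕ, (cmt a (b⁻¹ * a * b)) ^ (2 ^ k) ∈
        (⊤ : Subgroup G).lowerCentralSeries (n - 1) := by
  set c : G := cmt a (b⁻¹ * a * b) with hc
  set w : G := b⁻¹ * a^3 with hw
  have keyN : ∀ N : ℕ, w⁻¹ * c^N * w = (c^N)⁻¹ := by
    intro N
    have : w⁻¹ * c^N * w = (w⁻¹ * c * w)^N := by
      induction N with
      | zero => group
      | succ n ih => rw [pow_succ, pow_succ, ← ih]; group
    rw [this, key, inv_pow]
  constructor
  · -- part 1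
    have e2 : cmt (cmt a (b⁻¹ * a * b)) (b⁻¹ * a ^ 3 * b * b⁻¹)
        = c⁻¹ * (w⁻¹ * c * w) := by
      rw [hc, hw]; unfold cmt; group
    rw [e2, key]
    rw [hc, pow_two]; unfold cmt; group
  · intro n hn
    refine ⟨n - 1, ?_⟩
    induction' m : (n - 1) with k ih generalizing n
    · simp [Subgroup.lowerCentralSeries_zero]
    · have hk : c ^ 2 ^ k ∈ (⊤ : Subgroup G).lowerCentralSeries k := by
        rcases k with _ | k'
        · simp [Subgroup.lowerCentralSeries_zero]
        · exact ih (k' + 2) (by omega) (by omega)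
      set x : G := c ^ 2 ^ k with hx
      have hinv : x = w * x⁻¹ * w⁻¹ := by
        have h := keyN (2^k)
        calc x = w * (w⁻¹ * c ^ 2 ^ k * w) * w⁻¹ := by rw [← hx]; group
          _ = w * x⁻¹ * w⁻¹ := by rw [h, hx]
      have hexp : (2:ℕ) ^ (k+1) = 2^k + 2^k := by rw [pow_succ]; ring
      have hsq : c ^ 2 ^ (k + 1) = x * w * x⁻¹ * w⁻¹ := by
        have e : x * w * x⁻¹ * w⁻¹ = x * (w * x⁻¹ * w⁻¹) := by group
        rw [e, ← hinv, hx, hexp, pow_add]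
      rw [hsq]
      rw [Subgroup.mem_lowerCentralSeries_succ_iff]
      exact Subgroup.subset_closure ⟨x, hk, w, Subgroup.mem_top w, rfl⟩


end OneRelatorLCS
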